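/- Let n ≥ 4 and suppose x : ℝ → ((Fin n → Bool) → ℝ) satisfies the TASEP master equation with rates α, β, h. Then for every k with 2 ≤ k ≤ n-2, the function t ↦ ⟨τ_k ξ_{k-1}⟩(t) = Σ_{s : s k = true ∧ s (k-1) = false} x t s is differentiable and its derivative at every t equals h (k+1) * ⟨τ_{k+1} ξ_k ξ_{k-1}⟩(t) + h (k-1) * ⟨τ_k τ_{k-1} ξ_{k-2}⟩(t) − h k * ⟨τ_k ξ_{k-1}⟩(t), where ⟨τ_{k+1} ξ_k ξ_{k-1}⟩(t) = Σ_{s : s (k+1) = true ∧ s k = false ∧ s (k-1) = false} x t s and ⟨τ_k τ_{k-1} ξ_{k-2}⟩(t) = Σ_{s : s k = true ∧ s (k-1) = true ∧ s (k-2) = false} x t s. -/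

import Mathlib

open Finset

/-- The occupation status of site `k` in state `s` (false if `k` is not a valid site). -/
def occ (n : ℕ) (s : Fin n → Bool) (k : ℕ) : Bool :=
  if hk : k < n then s ⟨k, hk⟩ else false

/-- Update the occupation status of site `k` in state `s` to `b`. -/
def upd (n : ℕ) (s : Fin n → Bool) (k : ℕ) (b : Bool) : Fin n → Bool :=
  if hk : k < n then Function.update s ⟨k, hk⟩ b else s

/-- `x : ℝ → (Fin n → Bool) → ℝ` satisfies the TASEP master equation with entry rate `α`,
exit rate `β` and internal rates `h`. -/
def MasterEq (n : ℕ) (α β : ℝ) (h : ℕ → ℝ) (x : ℝ → (Fin n → Bool) → ℝ) : Prop :=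
  ∀ (s : Fin n → Bool) (t : ℝ),
    HasDerivAt (fun τ => x τ s)
      ((if occ n s (n-1) = true then α * x t (upd n s (n-1) false) else 0)
        + (if occ n s 0 = false then β * x t (upd n s 0 true) else 0)
        + (∑ k ∈ Finset.Icc 1 (n-1),
            if occ n s k = false ∧ occ n s (k-1) = true
              then h k * x t (upd n (upd n s k true) (k-1) false) else 0)
        - x t s * ((if occ n s (n-1) = false then α else 0)
            + (if occ n s 0 = true then β else 0)
            + ∑ k ∈ Finset.Icc 1 (n-1),
                if occ n s k = true ∧ occ n s (k-1) = false then h k else 0)) t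

namespace TASEPaux

lemma occ_upd {n : ℕ} (s : Fin n → Bool) {j : ℕ} (hj : j < n) (b : Bool) (i : ℕ) :
    occ n (upd n s j b) i = if i = j then b else occ n s i := by
  unfold occ upd
  rw [dif_pos hj]
  by_cases hi : i < n
  · rw [dif_pos hi, dif_pos hi, Function.update_apply]
    simp [Fin.mk.injEq]
  · rw [dif_neg hi, dif_neg hi, if_neg]
    rintro rfl; exact hi hj

lemma occ_val {n : ℕ} (s : Fin n → Bool) (i : Fin n) : occ n s i.val = s i := by
  unfold occ; rw [dif_pos i.isLt]

def swp (n j : ℕ) (s : Fin n → Bool) : Fin n → Bool :=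
  upd n (upd n s j (occ n s (j-1))) (j-1) (occ n s j)

def tog (n j : ℕ) (s : Fin n → Bool) : Fin n → Bool :=
  upd n s j (!occ n s j)

lemma occ_swp {n : ℕ} (s : Fin n → Bool) {j : ℕ} (hj1 : 1 ≤ j) (hjn : j < n) (i : ℕ) :
    occ n (swp n j s) i
      = if i = j - 1 then occ n s j else if i = j then occ n s (j-1) else occ n s i := by
  have hj1n : j - 1 < n := lt_of_le_of_lt (Nat.sub_le _ _) hjn
  unfold swp
  rw [occ_upd _ hj1n, occ_upd _ hjn]

lemma swp_invol {n : ℕ} {j : ℕ} (hj1 : 1 ≤ j) (hjn : j < n) :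
    Function.Involutive (swp n j) := by
  intro s
  funext i
  rw [← occ_val (swp n j (swp n j s)) i, ← occ_val s i]
  simp only [occ_swp _ hj1 hjn]
  have hne : j ≠ j - 1 := by omega
  split_ifs with h1 h2 <;> simp_all

lemma occ_tog {n : ℕ} (s : Fin n → Bool) {j : ℕ} (hj : j < n) (i : ℕ) :
    occ n (tog n j s) i = if i = j then !occ n s j else occ n s i := by
  unfold tog; rw [occ_upd _ hj]

lemma tog_invol {n : ℕ} {j : ℕ} (hj : j < n) : Function.Involutive (tog n j) := by
  intro s
  funext i
  rw [← occ_val (tog n j (tog n j s)) i, ← occ_val s i]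
  rw [occ_tog _ hj, occ_tog _ hj, occ_tog _ hj]
  split_ifs with h1 <;> simp_all

lemma src_hop {n : ℕ} (s : Fin n → Bool) {j : ℕ} (h0 : occ n s j = false)
    (h1 : occ n s (j-1) = true) :
    upd n (upd n s j true) (j-1) false = swp n j s := by
  unfold swp; rw [h0, h1]

lemma src_alpha {n : ℕ} (s : Fin n → Bool) (h1 : occ n s (n-1) = true) :
    upd n s (n-1) false = tog n (n-1) s := by
  unfold tog; rw [h1]; rfl

lemma src_beta {n : ℕ} (s : Fin n → Bool) (h1 : occ n s 0 = false) :
    upd n s 0 true = tog n 0 s := by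
  unfold tog; rw [h1]; rfl

section blocks

variable {n k : ℕ} (y : (Fin n → Bool) → ℝ)

/-- boundary-toggle block: gain at toggled site `m` equals loss, when `m ∉ {k, k-1}`. -/
lemma tog_block (m : ℕ) (hm : m < n) (hmk : m ≠ k) (hmk1 : m ≠ k - 1) (c : ℝ) (b : Bool) :
    (∑ s ∈ Finset.univ.filter
        (fun s : Fin n → Bool => occ n s k = true ∧ occ n s (k-1) = false),
      (if occ n s m = b then c * y (tog n m s) else 0))
    = ∑ s ∈ Finset.univ.filter
        (fun s : Fin n → Bool => occ n s k = true ∧ occ n s (k-1) = false),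
      y s * (if occ n s m = !b then c else 0) := by
  rw [Finset.sum_filter, Finset.sum_filter]
  rw [← Equiv.sum_comp (Function.Involutive.toPerm _ (tog_invol hm))
    (fun s => if occ n s k = true ∧ occ n s (k-1) = false then
      (if occ n s m = b then c * y (tog n m s) else 0) else 0)]
  refine Finset.sum_congr rfl fun s _ => ?_
  have hkm : ¬ k = m := fun h => hmk h.symm
  have hk1m : ¬ k - 1 = m := fun h => hmk1 h.symm
  simp only [Function.Involutive.coe_toPerm, tog_invol hm s, occ_tog _ hm]
  rw [if_neg hkm, if_neg hk1m]; simp only [if_true]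
  cases hb : occ n s m <;> cases b <;>
    by_cases hP : (occ n s k = true ∧ occ n s (k-1) = false) <;>
      simp [hP, hb, mul_comm]


lemma hop_gain (j : ℕ) (hj1 : 1 ≤ j) (hjn : j < n) (c : ℝ) :
    (∑ s ∈ Finset.univ.filter
        (fun s : Fin n → Bool => occ n s k = true ∧ occ n s (k-1) = false),
      (if occ n s j = false ∧ occ n s (j-1) = true
        then c * y (upd n (upd n s j true) (j-1) false) else 0))
    = ∑ s : Fin n → Bool,
        if (occ n (swp n j s) k = true ∧ occ n (swp n j s) (k-1) = false)
            ∧ (occ n s j = true ∧ occ n s (j-1) = false) then c * y s else 0 := by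
  rw [Finset.sum_filter]
  have step1 : ∀ s : Fin n → Bool, (if occ n s k = true ∧ occ n s (k-1) = false then
      (if occ n s j = false ∧ occ n s (j-1) = true
        then c * y (upd n (upd n s j true) (j-1) false) else 0) else 0)
    = if (occ n s k = true ∧ occ n s (k-1) = false) ∧ (occ n s j = false ∧ occ n s (j-1) = true)
        then c * y (swp n j s) else 0 := by
    intro s
    by_cases hP : occ n s k = true ∧ occ n s (k-1) = false <;>
      by_cases hQ : occ n s j = false ∧ occ n s (j-1) = true
    · rw [if_pos hP, if_pos hQ, if_pos ⟨hP, hQ⟩, src_hop s hQ.1 hQ.2]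
    · rw [if_pos hP, if_neg hQ, if_neg (by tauto)]
    · rw [if_neg hP, if_neg (by tauto)]
    · rw [if_neg hP, if_neg (by tauto)]
  simp only [step1]
  rw [← Equiv.sum_comp (Function.Involutive.toPerm _ (swp_invol hj1 hjn))
    (fun s => if (occ n s k = true ∧ occ n s (k-1) = false)
        ∧ (occ n s j = false ∧ occ n s (j-1) = true) then c * y (swp n j s) else 0)]
  refine Finset.sum_congr rfl fun s _ => ?_
  simp only [Function.Involutive.coe_toPerm, swp_invol hj1 hjn s]
  have hne : ¬ j = j - 1 := by omega
  have e1 : occ n (swp n j s) j = occ n s (j-1) := by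
    rw [occ_swp _ hj1 hjn, if_neg hne, if_pos rfl]
  have e2 : occ n (swp n j s) (j-1) = occ n s j := by
    rw [occ_swp _ hj1 hjn, if_pos rfl]
  rw [e1, e2]
  exact if_congr (by tauto) rfl rfl

lemma hop_block (hk1 : 2 ≤ k) (j : ℕ) (hj1 : 1 ≤ j) (hjn : j < n) (c : ℝ) :
    (∑ s ∈ Finset.univ.filter
        (fun s : Fin n → Bool => occ n s k = true ∧ occ n s (k-1) = false),
      (if occ n s j = false ∧ occ n s (j-1) = true
        then c * y (upd n (upd n s j true) (j-1) false) else 0))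
    - (∑ s ∈ Finset.univ.filter
        (fun s : Fin n → Bool => occ n s k = true ∧ occ n s (k-1) = false),
        y s * (if occ n s j = true ∧ occ n s (j-1) = false then c else 0))
    = (if j = k+1 then c * (∑ s ∈ Finset.univ.filter
          (fun s : Fin n → Bool => occ n s (k+1) = true ∧ occ n s k = false
            ∧ occ n s (k-1) = false), y s) else 0)
      + (if j = k-1 then c * (∑ s ∈ Finset.univ.filter
          (fun s : Fin n → Bool => occ n s k = true ∧ occ n s (k-1) = true
            ∧ occ n s (k-2) = false), y s) else 0)
      - (if j = k then c * (∑ s ∈ Finset.univ.filter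
          (fun s : Fin n → Bool => occ n s k = true ∧ occ n s (k-1) = false), y s) else 0) := by
  rw [hop_gain y j hj1 hjn c]
  have hswpk : ∀ (i : ℕ) (s : Fin n → Bool), occ n (swp n j s) i
      = if i = j - 1 then occ n s j else if i = j then occ n s (j-1) else occ n s i :=
    fun i s => occ_swp s hj1 hjn i
  by_cases hjk1 : j = k + 1
  · subst hjk1
    rw [if_pos rfl, if_neg (by omega), if_neg (by omega), add_zero, sub_zero]
    simp only [show k+1-1 = k from by omega]
    have hl : (∑ s ∈ Finset.univ.filter
        (fun s : Fin n → Bool => occ n s k = true ∧ occ n s (k-1) = false),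
        y s * (if occ n s (k+1) = true ∧ occ n s k = false then c else 0)) = 0 := by
      refine Finset.sum_eq_zero fun s hs => ?_
      rw [Finset.mem_filter] at hs
      rw [if_neg, mul_zero]
      rintro ⟨-, h2⟩
      rw [hs.2.1] at h2; exact absurd h2 (by simp)
    rw [hl, sub_zero, Finset.mul_sum, Finset.sum_filter]
    refine Finset.sum_congr rfl fun s _ => ?_
    rw [hswpk k s, hswpk (k-1) s]
    rw [if_pos (show k = k+1-1 from by omega),
      if_neg (show ¬(k-1 = k+1-1) from by omega), if_neg (show ¬(k-1 = k+1) from by omega)]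
    by_cases hc : occ n s (k+1) = true ∧ occ n s k = false ∧ occ n s (k-1) = false
    · rw [if_pos (by tauto), if_pos hc]
    · rw [if_neg (by tauto), if_neg hc]
  by_cases hjk : j = k
  · replace hjk : k = j := hjk.symm
    subst hjk
    rw [if_neg hjk1, if_neg (by omega), if_pos rfl, zero_add, zero_sub]
    have hg : (∑ s : Fin n → Bool,
        if (occ n (swp n k s) k = true ∧ occ n (swp n k s) (k-1) = false)
            ∧ (occ n s k = true ∧ occ n s (k-1) = false) then c * y s else 0) = 0 := by
      refine Finset.sum_eq_zero fun s _ => ?_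
      rw [if_neg]
      rintro ⟨⟨h1, -⟩, ⟨h3, h4⟩⟩
      rw [hswpk k s, if_neg (by omega), if_pos rfl] at h1
      rw [h1] at h4; exact absurd h4 (by simp)
    rw [hg, zero_sub, neg_inj, Finset.mul_sum]
    refine Finset.sum_congr rfl fun s hs => ?_
    rw [Finset.mem_filter] at hs
    rw [if_pos ⟨hs.2.1, hs.2.2⟩, mul_comm]
  by_cases hjk2 : j = k - 1
  · subst hjk2
    rw [if_neg hjk1, if_pos rfl, if_neg hjk, zero_add, sub_zero]
    simp only [show k-1-1 = k-2 from by omega]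
    have hl : (∑ s ∈ Finset.univ.filter
        (fun s : Fin n → Bool => occ n s k = true ∧ occ n s (k-1) = false),
        y s * (if occ n s (k-1) = true ∧ occ n s (k-2) = false then c else 0)) = 0 := by
      refine Finset.sum_eq_zero fun s hs => ?_
      rw [Finset.mem_filter] at hs
      rw [if_neg, mul_zero]
      rintro ⟨h1, -⟩
      rw [hs.2.2] at h1; exact absurd h1 (by simp)
    rw [hl, sub_zero, Finset.mul_sum, Finset.sum_filter]
    refine Finset.sum_congr rfl fun s _ => ?_
    rw [hswpk k s, hswpk (k-1) s]
    rw [if_neg (show ¬(k = k-1-1) from by omega), if_neg (show ¬(k = k-1) from by omega),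
      if_neg (show ¬(k-1 = k-1-1) from by omega), if_pos (rfl : k-1 = k-1)]
    simp only [show k-1-1 = k-2 from by omega]
    by_cases hc : occ n s k = true ∧ occ n s (k-1) = true ∧ occ n s (k-2) = false
    · rw [if_pos (by tauto), if_pos hc]
    · rw [if_neg (by tauto), if_neg hc]
  · rw [if_neg hjk1, if_neg hjk2, if_neg hjk, zero_add, sub_zero, sub_eq_zero,
      Finset.sum_filter]
    refine Finset.sum_congr rfl fun s _ => ?_
    rw [hswpk k s, hswpk (k-1) s]
    rw [if_neg (show ¬(k = j-1) from by omega), if_neg (show ¬(k = j) from by omega),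
      if_neg (show ¬(k-1 = j-1) from by omega), if_neg (show ¬(k-1 = j) from by omega)]
    by_cases hP : occ n s k = true ∧ occ n s (k-1) = false <;>
      by_cases hQ : occ n s j = true ∧ occ n s (j-1) = false
    · rw [if_pos (by tauto), if_pos hP, if_pos hQ, mul_comm]
    · rw [if_neg (by tauto), if_pos hP, if_neg hQ, mul_zero]
    · rw [if_neg (by tauto), if_neg hP]
    · rw [if_neg (by tauto), if_neg hP]


lemma key (hn : 4 ≤ n) (hk1 : 2 ≤ k) (hk2 : k ≤ n - 2) (α β : ℝ) (h : ℕ → ℝ) :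
    (∑ s ∈ Finset.univ.filter
        (fun s : Fin n → Bool => occ n s k = true ∧ occ n s (k-1) = false),
      ((if occ n s (n-1) = true then α * y (upd n s (n-1) false) else 0)
        + (if occ n s 0 = false then β * y (upd n s 0 true) else 0)
        + (∑ j ∈ Finset.Icc 1 (n-1),
            if occ n s j = false ∧ occ n s (j-1) = true
              then h j * y (upd n (upd n s j true) (j-1) false) else 0)
        - y s * ((if occ n s (n-1) = false then α else 0)
            + (if occ n s 0 = true then β else 0)
            + ∑ j ∈ Finset.Icc 1 (n-1),
                if occ n s j = true ∧ occ n s (j-1) = false then h j else 0)))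
    = h (k+1) * (∑ s ∈ Finset.univ.filter
          (fun s : Fin n → Bool =>
            occ n s (k+1) = true ∧ occ n s k = false ∧ occ n s (k-1) = false), y s)
      + h (k-1) * (∑ s ∈ Finset.univ.filter
          (fun s : Fin n → Bool =>
            occ n s k = true ∧ occ n s (k-1) = true ∧ occ n s (k-2) = false), y s)
      - h k * (∑ s ∈ Finset.univ.filter
          (fun s : Fin n → Bool => occ n s k = true ∧ occ n s (k-1) = false), y s) := by
  have hn1 : n - 1 < n := by omega
  have h0n : (0:ℕ) < n := by omega
  calc
    (∑ s ∈ Finset.univ.filter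
        (fun s : Fin n → Bool => occ n s k = true ∧ occ n s (k-1) = false),
      ((if occ n s (n-1) = true then α * y (upd n s (n-1) false) else 0)
        + (if occ n s 0 = false then β * y (upd n s 0 true) else 0)
        + (∑ j ∈ Finset.Icc 1 (n-1),
            if occ n s j = false ∧ occ n s (j-1) = true
              then h j * y (upd n (upd n s j true) (j-1) false) else 0)
        - y s * ((if occ n s (n-1) = false then α else 0)
            + (if occ n s 0 = true then β else 0)
            + ∑ j ∈ Finset.Icc 1 (n-1),
                if occ n s j = true ∧ occ n s (j-1) = false then h j else 0)))
      = ∑ s ∈ Finset.univ.filter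
          (fun s : Fin n → Bool => occ n s k = true ∧ occ n s (k-1) = false),
        (((if occ n s (n-1) = true then α * y (tog n (n-1) s) else 0)
            - y s * (if occ n s (n-1) = false then α else 0))
          + ((if occ n s 0 = false then β * y (tog n 0 s) else 0)
            - y s * (if occ n s 0 = true then β else 0))
          + ∑ j ∈ Finset.Icc 1 (n-1),
              ((if occ n s j = false ∧ occ n s (j-1) = true
                  then h j * y (upd n (upd n s j true) (j-1) false) else 0)
                - y s * (if occ n s j = true ∧ occ n s (j-1) = false then h j else 0))) := by
        refine Finset.sum_congr rfl fun s _ => ?_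
        rw [Finset.sum_sub_distrib, ← Finset.mul_sum]
        have e1 : (if occ n s (n-1) = true then α * y (upd n s (n-1) false) else 0)
            = (if occ n s (n-1) = true then α * y (tog n (n-1) s) else 0) := by
          by_cases hq : occ n s (n-1) = true
          · rw [if_pos hq, if_pos hq, src_alpha s hq]
          · rw [if_neg hq, if_neg hq]
        have e2 : (if occ n s 0 = false then β * y (upd n s 0 true) else 0)
            = (if occ n s 0 = false then β * y (tog n 0 s) else 0) := by
          by_cases hq : occ n s 0 = false
          · rw [if_pos hq, if_pos hq, src_beta s hq]
          · rw [if_neg hq, if_neg hq]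
        rw [e1, e2]; ring
    _ = (∑ s ∈ Finset.univ.filter
          (fun s : Fin n → Bool => occ n s k = true ∧ occ n s (k-1) = false),
          ((if occ n s (n-1) = true then α * y (tog n (n-1) s) else 0)
            - y s * (if occ n s (n-1) = false then α else 0)))
        + (∑ s ∈ Finset.univ.filter
          (fun s : Fin n → Bool => occ n s k = true ∧ occ n s (k-1) = false),
          ((if occ n s 0 = false then β * y (tog n 0 s) else 0)
            - y s * (if occ n s 0 = true then β else 0)))
        + ∑ j ∈ Finset.Icc 1 (n-1), ∑ s ∈ Finset.univ.filter
            (fun s : Fin n → Bool => occ n s k = true ∧ occ n s (k-1) = false),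
              ((if occ n s j = false ∧ occ n s (j-1) = true
                  then h j * y (upd n (upd n s j true) (j-1) false) else 0)
                - y s * (if occ n s j = true ∧ occ n s (j-1) = false then h j else 0)) := by
        rw [Finset.sum_add_distrib, Finset.sum_add_distrib, Finset.sum_comm]
    _ = 0 + 0 + ∑ j ∈ Finset.Icc 1 (n-1),
          ((if j = k+1 then h j * (∑ s ∈ Finset.univ.filter
              (fun s : Fin n → Bool => occ n s (k+1) = true ∧ occ n s k = false
                ∧ occ n s (k-1) = false), y s) else 0)
            + (if j = k-1 then h j * (∑ s ∈ Finset.univ.filter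
              (fun s : Fin n → Bool => occ n s k = true ∧ occ n s (k-1) = true
                ∧ occ n s (k-2) = false), y s) else 0)
            - (if j = k then h j * (∑ s ∈ Finset.univ.filter
              (fun s : Fin n → Bool => occ n s k = true ∧ occ n s (k-1) = false), y s) else 0)) := by
        congr 1
        · congr 1
          · rw [Finset.sum_sub_distrib, sub_eq_zero]
            have := tog_block (k := k) y (n-1) hn1 (by omega) (by omega) α true
            simpa using this
          · rw [Finset.sum_sub_distrib, sub_eq_zero]
            have := tog_block (k := k) y 0 h0n (by omega) (by omega) β false
            simpa using this
        · refine Finset.sum_congr rfl fun j hj => ?_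
          rw [Finset.mem_Icc] at hj
          rw [Finset.sum_sub_distrib]
          exact hop_block y hk1 j hj.1 (by omega) (h j)
    _ = h (k+1) * (∑ s ∈ Finset.univ.filter
          (fun s : Fin n → Bool =>
            occ n s (k+1) = true ∧ occ n s k = false ∧ occ n s (k-1) = false), y s)
      + h (k-1) * (∑ s ∈ Finset.univ.filter
          (fun s : Fin n → Bool =>
            occ n s k = true ∧ occ n s (k-1) = true ∧ occ n s (k-2) = false), y s)
      - h k * (∑ s ∈ Finset.univ.filter
          (fun s : Fin n → Bool => occ n s k = true ∧ occ n s (k-1) = false), y s) := by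
        rw [zero_add, zero_add, Finset.sum_sub_distrib, Finset.sum_add_distrib,
          Finset.sum_ite_eq' (Finset.Icc 1 (n-1)) (k+1),
          Finset.sum_ite_eq' (Finset.Icc 1 (n-1)) (k-1),
          Finset.sum_ite_eq' (Finset.Icc 1 (n-1)) k,
          if_pos (Finset.mem_Icc.mpr (by omega)),
          if_pos (Finset.mem_Icc.mpr (by omega)),
          if_pos (Finset.mem_Icc.mpr (by omega))]

end blocks
end TASEPaux

theorem tasep_pair_correlation_derivative
    (n : ℕ) (hn : 4 ≤ n) (α β : ℝ) (h : ℕ → ℝ)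
    (x : ℝ → (Fin n → Bool) → ℝ) (hx : MasterEq n α β h x)
    (k : ℕ) (hk1 : 2 ≤ k) (hk2 : k ≤ n - 2) (t : ℝ) :
    HasDerivAt
      (fun τ => ∑ s ∈ Finset.univ.filter
          (fun s : Fin n → Bool => occ n s k = true ∧ occ n s (k-1) = false), x τ s)
      (h (k+1) * (∑ s ∈ Finset.univ.filter
            (fun s : Fin n → Bool =>
              occ n s (k+1) = true ∧ occ n s k = false ∧ occ n s (k-1) = false), x t s)
        + h (k-1) * (∑ s ∈ Finset.univ.filter
            (fun s : Fin n → Bool =>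
              occ n s k = true ∧ occ n s (k-1) = true ∧ occ n s (k-2) = false), x t s)
        - h k * (∑ s ∈ Finset.univ.filter
            (fun s : Fin n → Bool => occ n s k = true ∧ occ n s (k-1) = false), x t s)) t := by
  
  have hd : HasDerivAt
      (fun τ => ∑ s ∈ Finset.univ.filter
          (fun s : Fin n → Bool => occ n s k = true ∧ occ n s (k-1) = false), x τ s)
      (∑ s ∈ Finset.univ.filter
          (fun s : Fin n → Bool => occ n s k = true ∧ occ n s (k-1) = false),
        ((if occ n s (n-1) = true then α * x t (upd n s (n-1) false) else 0)
          + (if occ n s 0 = false then β * x t (upd n s 0 true) else 0)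
          + (∑ j ∈ Finset.Icc 1 (n-1),
              if occ n s j = false ∧ occ n s (j-1) = true
                then h j * x t (upd n (upd n s j true) (j-1) false) else 0)
          - x t s * ((if occ n s (n-1) = false then α else 0)
              + (if occ n s 0 = true then β else 0)
              + ∑ j ∈ Finset.Icc 1 (n-1),
                  if occ n s j = true ∧ occ n s (j-1) = false then h j else 0))) t :=
    HasDerivAt.fun_sum (fun s _ => hx s t)
  rwa [TASEPaux.key (x t) hn hk1 hk2 α β h] at hd
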